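/- arXiv:1109.4669 — 4 statements merged into one kernel-verified Lean document; each statement's English description precedes it below -/
import Mathlib

section
/- Let (B,L) be a Hadamard pair. If μ is a spectral measure on ℝ^d with spectrum Λ contained in Π(B), then Tμ is a spectral measure with spectrum SΛ = ∪_{l∈L}(R^T Λ + l). -/
open MeasureTheory Complex Finset Matrix
open scoped ENNReal NNReal

noncomputable def tauMap {d : ℕ} (Rr : Matrix (Fin d) (Fin d) ℝ) (b : Fin d → ℤ)
    (x : Fin d → ℝ) : Fin d → ℝ :=
  Rr⁻¹.mulVec (x + fun i => (b i : ℝ))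

noncomputable def measOp {d : ℕ} (Rr : Matrix (Fin d) (Fin d) ℝ) (B : Finset (Fin d → ℤ))
    (μ : Measure (Fin d → ℝ)) : Measure (Fin d → ℝ) :=
  (B.card : ℝ≥0∞)⁻¹ • ∑ b ∈ B, Measure.map (tauMap Rr b) μ

noncomputable def fourierTf {d : ℕ} (μ : Measure (Fin d → ℝ)) (x : Fin d → ℝ) : ℂ :=
  ∫ t, Complex.exp (2 * Real.pi * Complex.I * ((∑ i, x i * t i : ℝ) : ℂ)) ∂μ

noncomputable def expFn {d : ℕ} (l : Fin d → ℝ) (x : Fin d → ℝ) : ℂ :=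
  Complex.exp (2 * Real.pi * Complex.I * ((∑ i, l i * x i : ℝ) : ℂ))

/-- `Λ` is a spectrum for `μ`: the exponentials `e_λ`, `λ ∈ Λ`, form an orthonormal
basis of `L²(μ)`, expressed as orthonormality together with completeness. -/
def IsSpectral {d : ℕ} (μ : Measure (Fin d → ℝ)) (Λ : Set (Fin d → ℝ)) : Prop :=
  (∀ l1 ∈ Λ, ∀ l2 ∈ Λ, l1 ≠ l2 →
      ∫ x, expFn l1 x * (starRingEnd ℂ) (expFn l2 x) ∂μ = 0) ∧
  (∀ f : (Fin d → ℝ) → ℂ, MemLp f 2 μ →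
      (∀ l ∈ Λ, ∫ x, f x * (starRingEnd ℂ) (expFn l x) ∂μ = 0) → f =ᵐ[μ] 0)

noncomputable def hadamardMatrix {d : ℕ} (R : Matrix (Fin d) (Fin d) ℤ)
    (B L : Finset (Fin d → ℤ)) : Matrix {b // b ∈ B} {l // l ∈ L} ℂ :=
  fun b l => (Real.sqrt B.card : ℂ)⁻¹ * Complex.exp (2 * Real.pi * Complex.I *
    ((∑ i, ((R.map ((↑) : ℤ → ℝ))⁻¹.mulVec (fun j => ((b : Fin d → ℤ) j : ℝ))) i *
      ((l : Fin d → ℤ) i : ℝ) : ℝ) : ℂ))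

def IsHadamardPair {d : ℕ} (R : Matrix (Fin d) (Fin d) ℤ)
    (B L : Finset (Fin d → ℤ)) : Prop :=
  (hadamardMatrix R B L)ᴴ * hadamardMatrix R B L = 1 ∧
  hadamardMatrix R B L * (hadamardMatrix R B L)ᴴ = 1

def PiSet {d : ℕ} (B : Finset (Fin d → ℤ)) : Set (Fin d → ℝ) :=
  {γ | ∀ b ∈ B, ∃ m : ℤ, (∑ i, γ i * (b i : ℝ)) = (m : ℝ)}

/-- `SΛ = ∪_{l∈L} (R^T Λ + l)`. -/
def specOp {d : ℕ} (R : Matrix (Fin d) (Fin d) ℤ) (L : Finset (Fin d → ℤ))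
    (Λ : Set (Fin d → ℝ)) : Set (Fin d → ℝ) :=
  ⋃ l ∈ L, (fun γ => ((R.map ((↑) : ℤ → ℝ))ᵀ).mulVec γ + fun i => (l i : ℝ)) '' Λ

/-! ### Auxiliary material -/

section Aux
variable {d : ℕ}

noncomputable def ec (t : ℝ) : ℂ := Complex.exp (2 * Real.pi * Complex.I * (t : ℂ))

lemma ec_add (s t : ℝ) : ec (s + t) = ec s * ec t := by
  rw [ec, ec, ec, ← Complex.exp_add]; push_cast; ring_nf

lemma ec_zero : ec 0 = 1 := by simp [ec]

lemma ec_mul_ec_neg (t : ℝ) : ec t * ec (-t) = 1 := by rw [← ec_add]; simp [ec_zero]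

lemma conj_ec (t : ℝ) : (starRingEnd ℂ) (ec t) = ec (-t) := by
  rw [ec, ec, ← Complex.exp_conj]
  congr 1
  simp only [_root_.map_mul, Complex.conj_I, Complex.conj_ofReal, map_ofNat]
  push_cast
  ring

lemma ec_int (m : ℤ) : ec (m : ℝ) = 1 := by
  rw [ec, show (2 * (Real.pi:ℂ) * Complex.I * ((m:ℝ):ℂ))
      = (m : ℤ) * (2 * (Real.pi:ℂ) * Complex.I) by push_cast; ring]
  exact Complex.exp_int_mul_two_pi_mul_I m

lemma norm_ec (t : ℝ) : ‖ec t‖ = 1 := by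
  rw [ec, show (2 * (Real.pi:ℂ) * Complex.I * (t:ℂ))
      = ((2 * Real.pi * t : ℝ):ℂ) * Complex.I by push_cast; ring]
  rw [Complex.norm_exp_ofReal_mul_I]

lemma ec_ne_zero (t : ℝ) : ec t ≠ 0 := Complex.exp_ne_zero _

lemma norm_conj' (z : ℂ) : ‖(starRingEnd ℂ) z‖ = ‖z‖ := by
  exact Complex.norm_conj z

abbrev zc (b : Fin d → ℤ) : Fin d → ℝ := fun i => (b i : ℝ)

lemma expFn_eq (l x : Fin d → ℝ) : expFn l x = ec (l ⬝ᵥ x) := rfl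

lemma norm_expFn (l x : Fin d → ℝ) : ‖expFn l x‖ = 1 := norm_ec _

lemma dot_mulVec' (M : Matrix (Fin d) (Fin d) ℝ) (u v : Fin d → ℝ) :
    u ⬝ᵥ (M *ᵥ v) = (Mᵀ *ᵥ u) ⬝ᵥ v := by
  rw [dotProduct_mulVec, mulVec_transpose]

lemma continuous_mulVec (M : Matrix (Fin d) (Fin d) ℝ) : Continuous (M.mulVec) := by
  have h : ⇑(M.mulVecLin) = M.mulVec := funext fun v => M.mulVecLin_apply v
  rw [← h]
  exact M.mulVecLin.continuous_of_finiteDimensional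

lemma continuous_tauMap (Rr : Matrix (Fin d) (Fin d) ℝ) (b : Fin d → ℤ) :
    Continuous (tauMap Rr b) :=
  (continuous_mulVec _).comp (continuous_id.add continuous_const)

lemma continuous_expFn (l : Fin d → ℝ) : Continuous (expFn l) := by
  unfold expFn
  fun_prop

lemma continuous_conj_expFn (l : Fin d → ℝ) :
    Continuous (fun x => (starRingEnd ℂ) (expFn l x)) :=
  Complex.continuous_conj.comp (continuous_expFn l)

lemma continuous_ec : Continuous ec := by
  unfold ec
  fun_prop

lemma continuous_dot (m : Fin d → ℝ) : Continuous (fun x : Fin d → ℝ => m ⬝ᵥ x) := by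
  unfold dotProduct
  exact continuous_finset_sum _ fun i _ => (continuous_const.mul (continuous_apply i))

lemma continuous_ec_neg_dot (m : Fin d → ℝ) :
    Continuous (fun x : Fin d → ℝ => ec (-(m ⬝ᵥ x))) :=
  continuous_ec.comp (continuous_dot m).neg

noncomputable def tauEquiv (Rr : Matrix (Fin d) (Fin d) ℝ) (hdet : IsUnit Rr.det) (b : Fin d → ℤ) :
    (Fin d → ℝ) ≃ᵐ (Fin d → ℝ) where
  toFun := tauMap Rr b
  invFun := fun y => Rr *ᵥ y - zc b
  left_inv := fun x => by
    simp only [tauMap, mulVec_mulVec, Matrix.mul_nonsing_inv _ hdet, one_mulVec]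
    exact add_sub_cancel_right x (zc b)
  right_inv := fun y => by
    simp only [tauMap]
    rw [show ((Rr *ᵥ y - zc b) + fun i => ((b i : ℝ))) = Rr *ᵥ y from sub_add_cancel _ _,
      mulVec_mulVec, Matrix.nonsing_inv_mul _ hdet, one_mulVec]
  measurable_toFun := (continuous_tauMap Rr b).measurable
  measurable_invFun := ((continuous_mulVec Rr).sub continuous_const).measurable

lemma measurableEmbedding_tauMap (Rr : Matrix (Fin d) (Fin d) ℝ) (hdet : IsUnit Rr.det)
    (b : Fin d → ℤ) : MeasurableEmbedding (tauMap Rr b) :=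
  (tauEquiv Rr hdet b).measurableEmbedding

lemma dot_S_tau (Rr : Matrix (Fin d) (Fin d) ℝ) (hdet : IsUnit Rr.det)
    (lam : Fin d → ℝ) (l b : Fin d → ℤ) (x : Fin d → ℝ) :
    (Rrᵀ *ᵥ lam + zc l) ⬝ᵥ tauMap Rr b x
      = (lam ⬝ᵥ x + ((Rr⁻¹)ᵀ *ᵥ zc l) ⬝ᵥ x) + (lam ⬝ᵥ zc b + (Rr⁻¹ *ᵥ zc b) ⬝ᵥ zc l) := by
  have htau : tauMap Rr b x = Rr⁻¹ *ᵥ (x + zc b) := rfl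
  rw [htau, dot_mulVec', mulVec_add, mulVec_mulVec, ← transpose_mul,
    Matrix.mul_nonsing_inv _ hdet, transpose_one, one_mulVec]
  simp only [add_dotProduct, dotProduct_add]
  have h1 : ((Rr⁻¹)ᵀ *ᵥ zc l) ⬝ᵥ zc b = (Rr⁻¹ *ᵥ zc b) ⬝ᵥ zc l := by
    rw [← dot_mulVec', dotProduct_comm]
  rw [h1]

lemma isUnit_det_of_spectrum (R : Matrix (Fin d) (Fin d) ℤ)
    (hRexp : ∀ z ∈ spectrum ℂ (R.map ((↑) : ℤ → ℂ)), 1 < ‖z‖) :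
    IsUnit (R.map ((↑) : ℤ → ℝ)).det := by
  have hdetC : ((R.det : ℂ)) = (R.map ((↑) : ℤ → ℂ)).det := by
    have := RingHom.map_det (Int.castRingHom ℂ) R
    simpa using this
  have hc : (R.map ((↑) : ℤ → ℂ)).det ≠ 0 := by
    intro h0
    have hnu : ¬ IsUnit (R.map ((↑) : ℤ → ℂ)) := by
      rw [Matrix.isUnit_iff_isUnit_det, h0]
      exact not_isUnit_zero
    have h0m : (0 : ℂ) ∈ spectrum ℂ (R.map ((↑) : ℤ → ℂ)) := (spectrum.zero_mem_iff ℂ).2 hnu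
    have := hRexp 0 h0m
    rw [norm_zero] at this
    exact absurd this (by norm_num)
  have hZ : (R.det : ℂ) ≠ 0 := by rw [hdetC]; exact hc
  have hz : R.det ≠ 0 := by exact_mod_cast hZ
  have hdetR : (R.map ((↑) : ℤ → ℝ)).det = ((R.det : ℤ) : ℝ) := by
    have := RingHom.map_det (Int.castRingHom ℝ) R
    simpa using this.symm
  rw [hdetR]
  exact (by exact_mod_cast hz : ((R.det : ℤ):ℝ) ≠ 0).isUnit

section Had
variable (R : Matrix (Fin d) (Fin d) ℤ) (B L : Finset (Fin d → ℤ))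

lemma hadamard_entry (p : {b // b ∈ B}) (q : {l // l ∈ L}) :
    hadamardMatrix R B L p q
      = ((Real.sqrt B.card : ℝ) : ℂ)⁻¹
        * ec (((R.map ((↑) : ℤ → ℝ))⁻¹ *ᵥ zc (p : Fin d → ℤ)) ⬝ᵥ zc (q : Fin d → ℤ)) := rfl

lemma sqrt_card_sq (hB0 : B.card ≠ 0) :
    ((Real.sqrt B.card : ℝ) : ℂ)⁻¹ * ((Real.sqrt B.card : ℝ) : ℂ)⁻¹ = ((B.card : ℝ) : ℂ)⁻¹ := by
  rw [← mul_inv]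
  norm_cast
  rw [Real.mul_self_sqrt (Nat.cast_nonneg _)]

lemma hadamard_col (hB0 : B.card ≠ 0)
    (h : (hadamardMatrix R B L)ᴴ * hadamardMatrix R B L = 1)
    {l1 l2 : Fin d → ℤ} (h1 : l1 ∈ L) (h2 : l2 ∈ L) :
    ∑ b ∈ B, ec ((((R.map ((↑) : ℤ → ℝ))⁻¹ *ᵥ zc b) ⬝ᵥ zc l2)
        - (((R.map ((↑) : ℤ → ℝ))⁻¹ *ᵥ zc b) ⬝ᵥ zc l1))
      = if l1 = l2 then (B.card : ℂ) else 0 := by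
  have hent := congrFun (congrFun h ⟨l1, h1⟩) ⟨l2, h2⟩
  rw [Matrix.mul_apply] at hent
  simp only [Matrix.conjTranspose_apply, Matrix.one_apply, hadamard_entry, Complex.star_def,
    _root_.map_mul, map_inv₀, Complex.conj_ofReal] at hent
  have hsum : ∀ p : {b // b ∈ B},
      ((Real.sqrt B.card : ℝ) : ℂ)⁻¹ * (starRingEnd ℂ)
          (ec (((R.map ((↑) : ℤ → ℝ))⁻¹ *ᵥ zc (p : Fin d → ℤ)) ⬝ᵥ zc l1))
        * (((Real.sqrt B.card : ℝ) : ℂ)⁻¹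
          * ec (((R.map ((↑) : ℤ → ℝ))⁻¹ *ᵥ zc (p : Fin d → ℤ)) ⬝ᵥ zc l2))
      = ((B.card : ℝ) : ℂ)⁻¹ * ec ((((R.map ((↑) : ℤ → ℝ))⁻¹ *ᵥ zc (p : Fin d → ℤ)) ⬝ᵥ zc l2)
          - (((R.map ((↑) : ℤ → ℝ))⁻¹ *ᵥ zc (p : Fin d → ℤ)) ⬝ᵥ zc l1)) := by
    intro p
    rw [conj_ec, sub_eq_add_neg, ec_add, ← sqrt_card_sq B hB0]
    ring
  rw [Finset.sum_congr rfl (fun p _ => hsum p), ← Finset.mul_sum,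
    Finset.sum_coe_sort B (fun b => ec ((((R.map ((↑) : ℤ → ℝ))⁻¹ *ᵥ zc b) ⬝ᵥ zc l2)
      - (((R.map ((↑) : ℤ → ℝ))⁻¹ *ᵥ zc b) ⬝ᵥ zc l1)))] at hent
  have hC : ((B.card : ℝ) : ℂ) ≠ 0 := by
    simp only [ne_eq, Complex.ofReal_eq_zero, Nat.cast_eq_zero]
    exact hB0
  have hthis := congrArg (fun z => ((B.card : ℝ) : ℂ) * z) hent
  rw [← mul_assoc, mul_inv_cancel₀ hC, one_mul] at hthis
  rw [hthis]
  simp only [Subtype.mk_eq_mk]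
  split <;> norm_num

lemma hadamard_row (hB0 : B.card ≠ 0)
    (h : hadamardMatrix R B L * (hadamardMatrix R B L)ᴴ = 1)
    {b1 b2 : Fin d → ℤ} (h1 : b1 ∈ B) (h2 : b2 ∈ B) :
    ∑ l ∈ L, ec ((((R.map ((↑) : ℤ → ℝ))⁻¹ *ᵥ zc b1) ⬝ᵥ zc l)
        - (((R.map ((↑) : ℤ → ℝ))⁻¹ *ᵥ zc b2) ⬝ᵥ zc l))
      = if b1 = b2 then (B.card : ℂ) else 0 := by
  have hent := congrFun (congrFun h ⟨b1, h1⟩) ⟨b2, h2⟩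
  rw [Matrix.mul_apply] at hent
  simp only [Matrix.conjTranspose_apply, Matrix.one_apply, hadamard_entry, Complex.star_def,
    _root_.map_mul, map_inv₀, Complex.conj_ofReal] at hent
  have hsum : ∀ q : {l // l ∈ L},
      (((Real.sqrt B.card : ℝ) : ℂ)⁻¹
          * ec (((R.map ((↑) : ℤ → ℝ))⁻¹ *ᵥ zc b1) ⬝ᵥ zc (q : Fin d → ℤ)))
        * (((Real.sqrt B.card : ℝ) : ℂ)⁻¹ * (starRingEnd ℂ)
          (ec (((R.map ((↑) : ℤ → ℝ))⁻¹ *ᵥ zc b2) ⬝ᵥ zc (q : Fin d → ℤ))))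
      = ((B.card : ℝ) : ℂ)⁻¹ * ec ((((R.map ((↑) : ℤ → ℝ))⁻¹ *ᵥ zc b1) ⬝ᵥ zc (q : Fin d → ℤ))
          - (((R.map ((↑) : ℤ → ℝ))⁻¹ *ᵥ zc b2) ⬝ᵥ zc (q : Fin d → ℤ))) := by
    intro q
    rw [conj_ec, sub_eq_add_neg, ec_add, ← sqrt_card_sq B hB0]
    ring
  rw [Finset.sum_congr rfl (fun q _ => hsum q), ← Finset.mul_sum,
    Finset.sum_coe_sort L (fun l => ec ((((R.map ((↑) : ℤ → ℝ))⁻¹ *ᵥ zc b1) ⬝ᵥ zc l)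
      - (((R.map ((↑) : ℤ → ℝ))⁻¹ *ᵥ zc b2) ⬝ᵥ zc l)))] at hent
  have hC : ((B.card : ℝ) : ℂ) ≠ 0 := by
    simp only [ne_eq, Complex.ofReal_eq_zero, Nat.cast_eq_zero]
    exact hB0
  have hthis := congrArg (fun z => ((B.card : ℝ) : ℂ) * z) hent
  rw [← mul_assoc, mul_inv_cancel₀ hC, one_mul] at hthis
  rw [hthis]
  simp only [Subtype.mk_eq_mk]
  split <;> norm_num

end Had

end Aux

theorem spectral_of_measOp {d N : ℕ} (R : Matrix (Fin d) (Fin d) ℤ)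
    (hRexp : ∀ z ∈ spectrum ℂ (R.map ((↑) : ℤ → ℂ)), 1 < ‖z‖)
    (B L : Finset (Fin d → ℤ)) (hBcard : B.card = N) (hLcard : L.card = N) (hN : 2 ≤ N)
    (hH : IsHadamardPair R B L)
    (μ : Measure (Fin d → ℝ)) [IsProbabilityMeasure μ]
    (Λ : Set (Fin d → ℝ)) (hΛ : Λ ⊆ PiSet B) (hspec : IsSpectral μ Λ) :
    IsSpectral (measOp (R.map ((↑) : ℤ → ℝ)) B μ) (specOp R L Λ) := by
  classical
  set Rr : Matrix (Fin d) (Fin d) ℝ := R.map ((↑) : ℤ → ℝ) with hRr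
  have hdet : IsUnit Rr.det := isUnit_det_of_spectrum R hRexp
  have hB0 : B.card ≠ 0 := by omega
  have hN0 : (N : ℝ≥0∞) ≠ 0 := by
    simp only [ne_eq, Nat.cast_eq_zero]; omega
  have hNR : ((N:ℝ)⁻¹ : ℝ) ≠ 0 := by
    apply inv_ne_zero
    simp only [ne_eq, Nat.cast_eq_zero]; omega
  have hBC : ((B.card : ℕ) : ℂ) ≠ 0 := by
    simp only [ne_eq, Nat.cast_eq_zero]; exact hB0
  have hτmeas : ∀ b : Fin d → ℤ, Measurable (tauMap Rr b) :=
    fun b => (continuous_tauMap Rr b).measurable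
  have hmapb : ∀ b : Fin d → ℤ, IsProbabilityMeasure (Measure.map (tauMap Rr b) μ) :=
    fun b => Measure.isProbabilityMeasure_map (hτmeas b).aemeasurable
  -- integral against measOp
  have hint : ∀ g : (Fin d → ℝ) → ℂ,
      (∀ b ∈ B, Integrable g (Measure.map (tauMap Rr b) μ)) →
      ∫ x, g x ∂(measOp Rr B μ) = (N:ℝ)⁻¹ • ∑ b ∈ B, ∫ x, g (tauMap Rr b x) ∂μ := by
    intro g hg
    rw [show measOp Rr B μ = (B.card : ℝ≥0∞)⁻¹ • ∑ b ∈ B, Measure.map (tauMap Rr b) μ from rfl]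
    rw [integral_smul_measure, integral_finset_sum_measure hg, hBcard]
    congr 1
    · rw [ENNReal.toReal_inv]
      norm_num
    · exact Finset.sum_congr rfl fun b hb =>
        integral_map (hτmeas b).aemeasurable (hg b hb).aestronglyMeasurable
  have hmem : ∀ lam ∈ Λ, ∀ l ∈ L, (Rrᵀ *ᵥ lam + zc l) ∈ specOp R L Λ := by
    intro lam hlam l hl
    simp only [specOp, Set.mem_iUnion, Set.mem_image]
    exact ⟨l, hl, lam, hlam, rfl⟩
  constructor
  · -- orthogonality
    rintro γ1 hγ1 γ2 hγ2 hne
    simp only [specOp, Set.mem_iUnion, Set.mem_image] at hγ1 hγ2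
    obtain ⟨l1, hl1, lam1, hlam1, hγ1eq⟩ := hγ1
    obtain ⟨l2, hl2, lam2, hlam2, hγ2eq⟩ := hγ2
    have h1' : Rrᵀ *ᵥ lam1 + zc l1 = γ1 := hγ1eq
    have h2' : Rrᵀ *ᵥ lam2 + zc l2 = γ2 := hγ2eq
    subst h1' h2'
    have hintb : ∀ b ∈ B, Integrable (fun x => expFn (Rrᵀ *ᵥ lam1 + zc l1) x *
        (starRingEnd ℂ) (expFn (Rrᵀ *ᵥ lam2 + zc l2) x)) (Measure.map (tauMap Rr b) μ) := by
      intro b _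
      haveI := hmapb b
      apply Integrable.mono' (integrable_const (1:ℝ))
      · exact ((continuous_expFn _).mul (continuous_conj_expFn _)).aestronglyMeasurable
      · filter_upwards with x
        rw [norm_mul, norm_conj', norm_expFn, norm_expFn, mul_one]
    rw [hint _ hintb]
    have hptb : ∀ b ∈ B, (∫ x, expFn (Rrᵀ *ᵥ lam1 + zc l1) (tauMap Rr b x) *
          (starRingEnd ℂ) (expFn (Rrᵀ *ᵥ lam2 + zc l2) (tauMap Rr b x)) ∂μ)
        = ec ((Rr⁻¹ *ᵥ zc b) ⬝ᵥ zc l1 - (Rr⁻¹ *ᵥ zc b) ⬝ᵥ zc l2)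
          * ∫ x, ec ((lam1 ⬝ᵥ x + ((Rr⁻¹)ᵀ *ᵥ zc l1) ⬝ᵥ x)
              - (lam2 ⬝ᵥ x + ((Rr⁻¹)ᵀ *ᵥ zc l2) ⬝ᵥ x)) ∂μ := by
      intro b hb
      obtain ⟨k1, hk1⟩ := hΛ hlam1 b hb
      obtain ⟨k2, hk2⟩ := hΛ hlam2 b hb
      have hdot1 : lam1 ⬝ᵥ zc b = (k1:ℝ) := hk1
      have hdot2 : lam2 ⬝ᵥ zc b = (k2:ℝ) := hk2
      have hfun : (fun x => expFn (Rrᵀ *ᵥ lam1 + zc l1) (tauMap Rr b x) *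
            (starRingEnd ℂ) (expFn (Rrᵀ *ᵥ lam2 + zc l2) (tauMap Rr b x)))
          = fun x => ec ((Rr⁻¹ *ᵥ zc b) ⬝ᵥ zc l1 - (Rr⁻¹ *ᵥ zc b) ⬝ᵥ zc l2)
            * ec ((lam1 ⬝ᵥ x + ((Rr⁻¹)ᵀ *ᵥ zc l1) ⬝ᵥ x)
              - (lam2 ⬝ᵥ x + ((Rr⁻¹)ᵀ *ᵥ zc l2) ⬝ᵥ x)) := by
        funext x
        rw [expFn_eq, expFn_eq, conj_ec, ← ec_add, dot_S_tau Rr hdet lam1 l1 b x,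
          dot_S_tau Rr hdet lam2 l2 b x, hdot1, hdot2]
        rw [show ((lam1 ⬝ᵥ x + ((Rr⁻¹)ᵀ *ᵥ zc l1) ⬝ᵥ x) + ((k1:ℝ) + (Rr⁻¹ *ᵥ zc b) ⬝ᵥ zc l1))
            + -((lam2 ⬝ᵥ x + ((Rr⁻¹)ᵀ *ᵥ zc l2) ⬝ᵥ x) + ((k2:ℝ) + (Rr⁻¹ *ᵥ zc b) ⬝ᵥ zc l2))
            = ((Rr⁻¹ *ᵥ zc b) ⬝ᵥ zc l1 - (Rr⁻¹ *ᵥ zc b) ⬝ᵥ zc l2)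
              + (((lam1 ⬝ᵥ x + ((Rr⁻¹)ᵀ *ᵥ zc l1) ⬝ᵥ x)
                - (lam2 ⬝ᵥ x + ((Rr⁻¹)ᵀ *ᵥ zc l2) ⬝ᵥ x)) + ((k1 - k2 : ℤ) : ℝ)) by
          push_cast; ring]
        rw [ec_add, ec_add, ec_int, mul_one]
      rw [hfun, integral_const_mul]
    rw [Finset.sum_congr rfl hptb, ← Finset.sum_mul]
    by_cases hll : l1 = l2
    · subst hll
      have hlamne : lam1 ≠ lam2 := by
        intro h
        exact hne (by rw [h])
      have hJ : (∫ x, ec ((lam1 ⬝ᵥ x + ((Rr⁻¹)ᵀ *ᵥ zc l1) ⬝ᵥ x)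
          - (lam2 ⬝ᵥ x + ((Rr⁻¹)ᵀ *ᵥ zc l1) ⬝ᵥ x)) ∂μ) = 0 := by
        have horthμ := hspec.1 lam1 hlam1 lam2 hlam2 hlamne
        rw [← horthμ]
        apply integral_congr_ae
        filter_upwards with x
        rw [expFn_eq, expFn_eq, conj_ec, ← ec_add]
        congr 1
        ring
      rw [hJ, mul_zero, smul_zero]
    · have hS := hadamard_col R B L hB0 hH.1 hl2 hl1
      rw [hS, if_neg (Ne.symm hll), zero_mul, smul_zero]
  · -- completeness
    intro f hf horth
    have hνe : (N:ℝ≥0∞) • (measOp Rr B μ) = ∑ b ∈ B, Measure.map (tauMap Rr b) μ := by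
      rw [show measOp Rr B μ = (B.card : ℝ≥0∞)⁻¹ • ∑ b ∈ B, Measure.map (tauMap Rr b) μ from rfl]
      rw [smul_smul, hBcard, ENNReal.mul_inv_cancel hN0 (ENNReal.natCast_ne_top N), one_smul]
    have hfmapb : ∀ b ∈ B, MemLp f 2 (Measure.map (tauMap Rr b) μ) := by
      intro b hb
      have h1 : MemLp f 2 ((N:ℝ≥0∞) • measOp Rr B μ) :=
        hf.smul_measure (ENNReal.natCast_ne_top N)
      apply h1.mono_measure
      rw [hνe]
      refine Measure.le_iff.2 fun s _ => ?_
      rw [Measure.coe_finset_sum, Finset.sum_apply]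
      exact Finset.single_le_sum (f := fun b => Measure.map (tauMap Rr b) μ s)
        (fun i _ => zero_le) hb
    have hfb : ∀ b ∈ B, MemLp (fun x => f (tauMap Rr b x)) 2 μ := fun b hb =>
      (memLp_map_measure_iff (hfmapb b hb).aestronglyMeasurable (hτmeas b).aemeasurable).mp
        (hfmapb b hb)
    set gfun : (Fin d → ℤ) → (Fin d → ℝ) → ℂ := fun l x => ∑ b ∈ B,
      ec (-((Rr⁻¹ *ᵥ zc b) ⬝ᵥ zc l)) * (f (tauMap Rr b x) * ec (-(((Rr⁻¹)ᵀ *ᵥ zc l) ⬝ᵥ x)))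
      with hgfun
    have hgmem : ∀ l : Fin d → ℤ, MemLp (gfun l) 2 μ := by
      intro l
      apply memLp_finset_sum B
      intro b hb
      apply MemLp.of_le (hfb b hb)
      · exact (((hfb b hb).aestronglyMeasurable.mul
          (continuous_ec_neg_dot _).aestronglyMeasurable).const_mul _)
      · filter_upwards with x
        rw [norm_mul, norm_mul, norm_ec, norm_ec, one_mul, mul_one]
    have hg0 : ∀ l ∈ L, gfun l =ᵐ[μ] 0 := by
      intro l hl
      apply hspec.2 (gfun l) (hgmem l)
      intro lam hlam
      have h0 := horth _ (hmem lam hlam l hl)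
      have hib : ∀ b ∈ B, Integrable (fun x => f x *
          (starRingEnd ℂ) (expFn (Rrᵀ *ᵥ lam + zc l) x)) (Measure.map (tauMap Rr b) μ) := by
        intro b hb
        haveI := hmapb b
        have hfint : Integrable f (Measure.map (tauMap Rr b) μ) :=
          (hfmapb b hb).integrable one_le_two
        have := hfint.bdd_mul
          ((continuous_conj_expFn (Rrᵀ *ᵥ lam + zc l)).aestronglyMeasurable)
          (c := 1) (Filter.Eventually.of_forall fun x => by rw [norm_conj', norm_expFn])
        apply this.congr
        filter_upwards with x
        rw [mul_comm]
      rw [hint _ hib] at h0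
      have hpt : ∀ b ∈ B, (∫ x, f (tauMap Rr b x) *
            (starRingEnd ℂ) (expFn (Rrᵀ *ᵥ lam + zc l) (tauMap Rr b x)) ∂μ)
          = ∫ x, (ec (-((Rr⁻¹ *ᵥ zc b) ⬝ᵥ zc l))
              * (f (tauMap Rr b x) * ec (-(((Rr⁻¹)ᵀ *ᵥ zc l) ⬝ᵥ x))))
              * (starRingEnd ℂ) (expFn lam x) ∂μ := by
        intro b hb
        obtain ⟨k, hk⟩ := hΛ hlam b hb
        have hdk : lam ⬝ᵥ zc b = (k:ℝ) := hk
        apply integral_congr_ae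
        filter_upwards with x
        rw [expFn_eq (Rrᵀ *ᵥ lam + zc l), conj_ec, dot_S_tau Rr hdet lam l b x, hdk,
          expFn_eq lam x, conj_ec]
        rw [show -((lam ⬝ᵥ x + ((Rr⁻¹)ᵀ *ᵥ zc l) ⬝ᵥ x) + ((k:ℝ) + (Rr⁻¹ *ᵥ zc b) ⬝ᵥ zc l))
            = -((Rr⁻¹ *ᵥ zc b) ⬝ᵥ zc l) + (-(((Rr⁻¹)ᵀ *ᵥ zc l) ⬝ᵥ x)
              + (-(lam ⬝ᵥ x) + ((-k : ℤ) : ℝ))) by push_cast; ring]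
        rw [ec_add, ec_add, ec_add, ec_int]
        ring
      rw [Finset.sum_congr rfl hpt] at h0
      have hibt : ∀ b ∈ B, Integrable (fun x =>
          (ec (-((Rr⁻¹ *ᵥ zc b) ⬝ᵥ zc l)) * (f (tauMap Rr b x)
            * ec (-(((Rr⁻¹)ᵀ *ᵥ zc l) ⬝ᵥ x)))) * (starRingEnd ℂ) (expFn lam x)) μ := by
        intro b hb
        have hF : Integrable (fun x => f (tauMap Rr b x)) μ :=
          (hfb b hb).integrable one_le_two
        apply Integrable.mono' hF.norm
        · exact ((((hfb b hb).aestronglyMeasurable.mul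
            (continuous_ec_neg_dot _).aestronglyMeasurable).const_mul _).mul
            (continuous_conj_expFn _).aestronglyMeasurable)
        · filter_upwards with x
          rw [norm_mul, norm_mul, norm_mul, norm_conj', norm_expFn, norm_ec, norm_ec,
            one_mul, mul_one, mul_one]
      rw [← integral_finset_sum B hibt] at h0
      have h0' := (smul_eq_zero.mp h0).resolve_left hNR
      rw [← h0']
      apply integral_congr_ae
      filter_upwards with x
      rw [hgfun]
      simp only
      rw [Finset.sum_mul]
    have haeL : ∀ᵐ x ∂μ, ∀ l ∈ L, gfun l x = 0 := by
      rw [Filter.eventually_all_finset]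
      intro l hl
      filter_upwards [hg0 l hl] with x hx
      simpa using hx
    have haeB : ∀ᵐ x ∂μ, ∀ b ∈ B, f (tauMap Rr b x) = 0 := by
      filter_upwards [haeL] with x hx
      intro b0 hb0
      have hlb : ∀ l ∈ L, ec ((Rr⁻¹ *ᵥ zc b0) ⬝ᵥ zc l)
            * (ec ((((Rr⁻¹)ᵀ *ᵥ zc l) ⬝ᵥ x)) * gfun l x)
          = ∑ b ∈ B, ec (((Rr⁻¹ *ᵥ zc b0) ⬝ᵥ zc l) - ((Rr⁻¹ *ᵥ zc b) ⬝ᵥ zc l))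
              * f (tauMap Rr b x) := by
        intro l hl
        rw [hgfun]
        simp only
        rw [Finset.mul_sum, Finset.mul_sum]
        refine Finset.sum_congr rfl fun b hb => ?_
        rw [show ec ((Rr⁻¹ *ᵥ zc b0) ⬝ᵥ zc l) * (ec ((((Rr⁻¹)ᵀ *ᵥ zc l) ⬝ᵥ x))
              * (ec (-((Rr⁻¹ *ᵥ zc b) ⬝ᵥ zc l)) * (f (tauMap Rr b x)
                * ec (-(((Rr⁻¹)ᵀ *ᵥ zc l) ⬝ᵥ x)))))
            = (ec ((Rr⁻¹ *ᵥ zc b0) ⬝ᵥ zc l) * ec (-((Rr⁻¹ *ᵥ zc b) ⬝ᵥ zc l)))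
              * (ec ((((Rr⁻¹)ᵀ *ᵥ zc l) ⬝ᵥ x)) * ec (-(((Rr⁻¹)ᵀ *ᵥ zc l) ⬝ᵥ x)))
              * f (tauMap Rr b x) by ring]
        rw [ec_mul_ec_neg, ← ec_add, mul_one, ← sub_eq_add_neg]
      have hcomb : ∑ l ∈ L, ec ((Rr⁻¹ *ᵥ zc b0) ⬝ᵥ zc l)
            * (ec ((((Rr⁻¹)ᵀ *ᵥ zc l) ⬝ᵥ x)) * gfun l x)
          = (B.card : ℂ) * f (tauMap Rr b0 x) := by
        rw [Finset.sum_congr rfl hlb, Finset.sum_comm]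
        have hswap : ∀ b ∈ B, ∑ l ∈ L,
            ec (((Rr⁻¹ *ᵥ zc b0) ⬝ᵥ zc l) - ((Rr⁻¹ *ᵥ zc b) ⬝ᵥ zc l)) * f (tauMap Rr b x)
            = (if b0 = b then (B.card:ℂ) else 0) * f (tauMap Rr b x) := by
          intro b hb
          rw [← Finset.sum_mul, hadamard_row R B L hB0 hH.2 hb0 hb]
        rw [Finset.sum_congr rfl hswap]
        simp only [ite_mul, zero_mul]
        rw [Finset.sum_ite_eq B b0 (fun b => (B.card:ℂ) * f (tauMap Rr b x)), if_pos hb0]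
      have hz : ∑ l ∈ L, ec ((Rr⁻¹ *ᵥ zc b0) ⬝ᵥ zc l)
          * (ec ((((Rr⁻¹)ᵀ *ᵥ zc l) ⬝ᵥ x)) * gfun l x) = 0 := by
        apply Finset.sum_eq_zero
        intro l hl
        rw [hx l hl, mul_zero, mul_zero]
      rw [hz] at hcomb
      exact (mul_eq_zero.mp hcomb.symm).resolve_left hBC
    have hmapz : ∀ b ∈ B, ∀ᵐ y ∂(Measure.map (tauMap Rr b) μ), f y = 0 := by
      intro b hb
      rw [(measurableEmbedding_tauMap Rr hdet b).ae_map_iff]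
      filter_upwards [haeB] with x hx
      exact hx b hb
    have hfinal : ∀ᵐ x ∂(measOp Rr B μ), f x = 0 := by
      rw [ae_iff]
      rw [show measOp Rr B μ = (B.card : ℝ≥0∞)⁻¹ • ∑ b ∈ B, Measure.map (tauMap Rr b) μ from rfl]
      rw [Measure.smul_apply, Measure.coe_finset_sum, Finset.sum_apply]
      have hz : ∀ b ∈ B, (Measure.map (tauMap Rr b) μ) {a | ¬ f a = 0} = 0 := by
        intro b hb
        exact ae_iff.mp (hmapz b hb)
      rw [Finset.sum_congr rfl hz, Finset.sum_const, smul_zero, smul_zero]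
    exact hfinal.mono fun x hx => by simp [hx]
end

section
/- For R = [[2,0],[1,2]], B = {(0,0),(1,0),(0,3),(1,3)}, L = {(0,0),(1,0),(0,1),(1,1)}, the pair (B,L) is a Hadamard pair, Π(B) = ℤ × (1/3)ℤ, and the point (0, 2/3) does not belong to SΠ(B) = ∪_{l∈L}(R^TΠ(B)+l); hence ∩_{n≥0} SⁿΠ(B) is a proper subset of Π(B). -/
open MeasureTheory Complex Finset Matrix
open scoped ENNReal NNReal

namespace CounterexampleAux

noncomputable def H' (b l : Fin 2 → ℤ) : ℂ :=
  (2 : ℂ)⁻¹ * Complex.exp (2 * Real.pi * Complex.I *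
    ((∑ i, ((!![1/2,0;-(1/4),1/2] : Matrix (Fin 2) (Fin 2) ℝ)).mulVec (fun j => ((b j : ℝ))) i *
      ((l i : ℝ)) : ℝ) : ℂ))

lemma inv_eq : ((!![2,0;1,2] : Matrix (Fin 2) (Fin 2) ℤ).map ((↑) : ℤ → ℝ))⁻¹
    = !![1/2,0;-(1/4),1/2] := by
  apply Matrix.inv_eq_right_inv
  ext i j
  fin_cases i <;> fin_cases j <;> simp [Matrix.mul_apply, Fin.sum_univ_two, Matrix.map_apply] <;>
    norm_num

lemma had_eq (b : {b // b ∈ ({![0, 0], ![1, 0], ![0, 3], ![1, 3]} : Finset (Fin 2 → ℤ))})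
    (l : {l // l ∈ ({![0, 0], ![1, 0], ![0, 1], ![1, 1]} : Finset (Fin 2 → ℤ))}) :
    hadamardMatrix !![2,0;1,2] {![0, 0], ![1, 0], ![0, 3], ![1, 3]}
      {![0, 0], ![1, 0], ![0, 1], ![1, 1]} b l = H' b.1 l.1 := by
  unfold hadamardMatrix H'
  rw [inv_eq]
  norm_num [show Finset.card ({![0, 0], ![1, 0], ![0, 3], ![1, 3]} : Finset (Fin 2 → ℤ)) = 4 by
    decide]

lemma hI : Complex.exp ((Real.pi : ℂ)/2 * I) = I := by
  rw [Complex.exp_mul_I]; simp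

lemma exp_quarter (k : ℤ) : Complex.exp (2 * (Real.pi:ℂ) * I * (k/4)) = I ^ k := by
  rw [show (2*(Real.pi:ℂ)*I*(k/4)) = k * ((Real.pi:ℂ)/2 * I) by ring, Complex.exp_int_mul, hI]

lemma Hval (b l : Fin 2 → ℤ) :
    H' b l = (2:ℂ)⁻¹ * I ^ ((2 * b 0 * l 0 - b 0 * l 1 + 2 * b 1 * l 1) : ℤ) := by
  unfold H'
  congr 1
  rw [← exp_quarter]
  congr 1
  simp [Matrix.mulVec, dotProduct, Fin.sum_univ_two]
  push_cast
  ring_nf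

lemma I3 : Complex.I ^ 3 = -Complex.I := by
  rw [pow_succ, Complex.I_sq]; ring
lemma I5 : Complex.I ^ 5 = Complex.I := by
  rw [show (5:ℕ) = 2*2+1 by norm_num, pow_succ, pow_mul, Complex.I_sq]; norm_num
lemma I6 : Complex.I ^ 6 = -1 := by
  rw [show (6:ℕ) = 2*3 by norm_num, pow_mul, Complex.I_sq]; norm_num
lemma I7 : Complex.I ^ 7 = -Complex.I := by
  rw [show (7:ℕ) = 2*3+1 by norm_num, pow_succ, pow_mul, Complex.I_sq]; norm_num

lemma I8 : Complex.I ^ 8 = 1 := by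
  rw [show (8:ℕ) = 4*2 by norm_num, pow_mul, Complex.I_pow_four]; norm_num
lemma I10 : Complex.I ^ 10 = -1 := by
  rw [show (10:ℕ) = 4*2+2 by norm_num, pow_add, pow_mul, Complex.I_pow_four, Complex.I_sq]; norm_num
lemma I11 : Complex.I ^ 11 = -Complex.I := by
  rw [show (11:ℕ) = 4*2+3 by norm_num, pow_add, pow_mul, Complex.I_pow_four, I3]; norm_num
lemma I12 : Complex.I ^ 12 = 1 := by
  rw [show (12:ℕ) = 4*3 by norm_num, pow_mul, Complex.I_pow_four]; norm_num
lemma I13 : Complex.I ^ 13 = Complex.I := by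
  rw [show (13:ℕ) = 4*3+1 by norm_num, pow_add, pow_mul, Complex.I_pow_four]; norm_num
lemma I14 : Complex.I ^ 14 = -1 := by
  rw [show (14:ℕ) = 4*3+2 by norm_num, pow_add, pow_mul, Complex.I_pow_four, Complex.I_sq]; norm_num

lemma conjIz (k : ℤ) : (starRingEnd ℂ) (Complex.I ^ k) = Complex.I ^ (-k) := by
  rw [map_zpow₀, Complex.conj_I, ← Complex.inv_I, _root_.inv_zpow, _root_.zpow_neg]

lemma Izmod (k : ℤ) : Complex.I ^ k = Complex.I ^ ((k % 4).toNat) := by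
  conv_lhs => rw [show k = 4*(k/4) + k%4 from (Int.mul_ediv_add_emod k 4).symm]
  rw [zpow_add₀ Complex.I_ne_zero, _root_.zpow_mul,
    show ((4:ℤ)) = ((4:ℕ):ℤ) from rfl, zpow_natCast, Complex.I_pow_four, _root_.one_zpow, one_mul,
    ← zpow_natCast, Int.toNat_of_nonneg (Int.emod_nonneg k (by norm_num))]

set_option maxHeartbeats 2000000 in
lemma unitary_left : (hadamardMatrix !![2,0;1,2] {![0, 0], ![1, 0], ![0, 3], ![1, 3]}
    {![0, 0], ![1, 0], ![0, 1], ![1, 1]})ᴴ *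
    hadamardMatrix !![2,0;1,2] {![0, 0], ![1, 0], ![0, 3], ![1, 3]}
    {![0, 0], ![1, 0], ![0, 1], ![1, 1]} = 1 := by
  ext l1 l2
  simp only [Matrix.mul_apply, Matrix.conjTranspose_apply, had_eq, Finset.univ_eq_attach]
  rw [Finset.sum_attach _ (fun b => star (H' b l1.1) * H' b l2.1)]
  obtain ⟨l1, hl1⟩ := l1
  obtain ⟨l2, hl2⟩ := l2
  rw [Finset.sum_insert (by decide), Finset.sum_insert (by decide), Finset.sum_insert (by decide),
    Finset.sum_singleton]
  rw [Hval, Hval, Hval, Hval, Hval, Hval, Hval, Hval]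
  fin_cases hl1 <;> fin_cases hl2 <;>
    norm_num [Matrix.one_apply, Subtype.ext_iff, Complex.star_def, _root_.map_mul, map_inv₀,
      funext_iff, Fin.forall_fin_two, conjIz, Izmod, I3, Complex.I_sq] <;>
    (try ring_nf) <;>
    (try norm_num [show Int.toNat 2 = 2 from rfl, show Int.toNat 3 = 3 from rfl, I3, I5, I6, I7,
      I8, I10, I11, I12, I13, I14, Complex.I_sq]) <;>
    (try ring)

set_option maxHeartbeats 2000000 in
lemma unitary_right : hadamardMatrix !![2,0;1,2] {![0, 0], ![1, 0], ![0, 3], ![1, 3]}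
    {![0, 0], ![1, 0], ![0, 1], ![1, 1]} *
    (hadamardMatrix !![2,0;1,2] {![0, 0], ![1, 0], ![0, 3], ![1, 3]}
    {![0, 0], ![1, 0], ![0, 1], ![1, 1]})ᴴ = 1 := by
  ext b1 b2
  simp only [Matrix.mul_apply, Matrix.conjTranspose_apply, had_eq, Finset.univ_eq_attach]
  rw [Finset.sum_attach _ (fun l => H' b1.1 l * star (H' b2.1 l))]
  obtain ⟨b1, hb1⟩ := b1
  obtain ⟨b2, hb2⟩ := b2
  rw [Finset.sum_insert (by decide), Finset.sum_insert (by decide), Finset.sum_insert (by decide),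
    Finset.sum_singleton]
  rw [Hval, Hval, Hval, Hval, Hval, Hval, Hval, Hval]
  fin_cases hb1 <;> fin_cases hb2 <;>
    norm_num [Matrix.one_apply, Subtype.ext_iff, Complex.star_def, _root_.map_mul, map_inv₀,
      funext_iff, Fin.forall_fin_two, conjIz, Izmod, I3, Complex.I_sq] <;>
    (try ring_nf) <;>
    (try norm_num [show Int.toNat 2 = 2 from rfl, show Int.toNat 3 = 3 from rfl, I3, I5, I6, I7,
      I8, I10, I11, I12, I13, I14, Complex.I_sq]) <;>
    (try ring)

lemma piset_eq : PiSet {![0, 0], ![1, 0], ![0, 3], ![1, 3]} =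
    {γ : Fin 2 → ℝ | (∃ m : ℤ, γ 0 = (m : ℝ)) ∧ (∃ m : ℤ, γ 1 = (m : ℝ) / 3)} := by
  ext γ
  simp only [PiSet, Set.mem_setOf_eq, Finset.mem_insert, Finset.mem_singleton, forall_eq_or_imp,
    forall_eq, Fin.sum_univ_two, Matrix.cons_val_zero, Matrix.cons_val_one, Matrix.head_cons]
  push_cast
  constructor
  · rintro ⟨-, ⟨m, hm⟩, ⟨k, hk⟩, -⟩
    exact ⟨⟨m, by linarith⟩, ⟨k, by linarith⟩⟩
  · rintro ⟨⟨m, hm⟩, ⟨k, hk⟩⟩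
    refine ⟨⟨0, by norm_num⟩, ⟨m, by linarith⟩, ⟨k, by rw [hm, hk]; push_cast; ring⟩, ⟨m + k, ?_⟩⟩
    rw [hm, hk]; push_cast; ring

lemma not_mem_spec : ![(0 : ℝ), 2 / 3] ∉ specOp !![2, 0; 1, 2] {![0, 0], ![1, 0], ![0, 1], ![1, 1]}
    (PiSet {![0, 0], ![1, 0], ![0, 3], ![1, 3]}) := by
  intro h
  simp only [specOp, Set.mem_iUnion, Finset.mem_insert, Finset.mem_singleton, Set.mem_image] at h
  obtain ⟨l, hl, γ, hγ, heq⟩ := h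
  obtain ⟨m, hm⟩ := hγ ![1,0] (by simp)
  obtain ⟨k, hk⟩ := hγ ![0,3] (by simp)
  simp only [Fin.sum_univ_two, Matrix.cons_val_zero, Matrix.cons_val_one,
    Matrix.head_cons] at hm hk
  push_cast at hm hk
  have h0 := congrFun heq 0
  have h1 := congrFun heq 1
  simp [Matrix.mulVec, dotProduct, Fin.sum_univ_two, Matrix.transpose_apply] at h0 h1
  have hγ1 : γ 1 = (k : ℝ)/3 := by linarith
  rw [hγ1] at h0 h1
  have e0 : ((6*m + k : ℤ) : ℝ) = ((-3 * l 0 : ℤ) : ℝ) := by push_cast; linarith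
  have e1 : ((2*k : ℤ) : ℝ) = ((2 - 3 * l 1 : ℤ) : ℝ) := by push_cast; linarith
  have e0' := Int.cast_injective e0
  have e1' := Int.cast_injective e1
  rcases hl with rfl|rfl|rfl|rfl <;> simp at e0' e1' <;> omega

end CounterexampleAux

theorem counterexample_dim_two :
    let R : Matrix (Fin 2) (Fin 2) ℤ := !![2, 0; 1, 2]
    let B : Finset (Fin 2 → ℤ) := {![0, 0], ![1, 0], ![0, 3], ![1, 3]}
    let L : Finset (Fin 2 → ℤ) := {![0, 0], ![1, 0], ![0, 1], ![1, 1]}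
    IsHadamardPair R B L ∧
    PiSet B = {γ : Fin 2 → ℝ | (∃ m : ℤ, γ 0 = (m : ℝ)) ∧ (∃ m : ℤ, γ 1 = (m : ℝ) / 3)} ∧
    ![(0 : ℝ), 2 / 3] ∉ specOp R L (PiSet B) ∧
    (⋂ n : ℕ, (specOp R L)^[n] (PiSet B)) ⊂ PiSet B := by
  intro R B L
  refine ⟨⟨CounterexampleAux.unitary_left, CounterexampleAux.unitary_right⟩,
    CounterexampleAux.piset_eq, CounterexampleAux.not_mem_spec, ?_⟩
  have hmem : ![(0 : ℝ), 2 / 3] ∈ PiSet B := by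
    rw [show PiSet B = _ from CounterexampleAux.piset_eq]
    exact ⟨⟨0, by norm_num⟩, ⟨2, by norm_num⟩⟩
  rw [Set.ssubset_def]
  constructor
  · intro x hx
    have := Set.mem_iInter.1 hx 0
    simpa using this
  · intro h
    have h1 := Set.mem_iInter.1 (h hmem) 1
    rw [Function.iterate_one] at h1
    exact CounterexampleAux.not_mem_spec h1
end

section
/- Suppose Borel probability measures μ_n on ℝ^d converge weakly to μ, and Λ_n ⊂ ℝ^d are such that the exponentials E(Λ_n) form Riesz basic sequences in L²(μ_n) with bounds A_n, B_n satisfying A_n → A > 0 and B_n → B < ∞. Then for the set Λ = ∩_n Λ_n (if nonempty), E(Λ) is a Riesz basic sequence in L²(μ) with lower bound A and upper bound B. -/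
open MeasureTheory Complex Finset Matrix
open scoped ENNReal NNReal

/-- The exponentials `E(Λ)` form a Riesz basic sequence in `L²(μ)` with bounds `A ≤ B`:
`A²∑|c_λ|² ≤ ‖∑ c_λ e_λ‖² ≤ B²∑|c_λ|²` for all finitely supported coefficients. -/
def RieszBounds {d : ℕ} (μ : Measure (Fin d → ℝ)) (Λ : Set (Fin d → ℝ)) (A B : ℝ) : Prop :=
  ∀ F : Finset (Fin d → ℝ), ↑F ⊆ Λ → ∀ c : (Fin d → ℝ) → ℂ,
    A ^ 2 * ∑ l ∈ F, ‖c l‖ ^ 2 ≤ ∫ x, ‖∑ l ∈ F, c l * expFn l x‖ ^ 2 ∂μ ∧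
    ∫ x, ‖∑ l ∈ F, c l * expFn l x‖ ^ 2 ∂μ ≤ B ^ 2 * ∑ l ∈ F, ‖c l‖ ^ 2

theorem riesz_limit {d : ℕ} (μ : ℕ → Measure (Fin d → ℝ))
    [∀ n, IsProbabilityMeasure (μ n)]
    (ν : Measure (Fin d → ℝ)) [IsProbabilityMeasure ν]
    (hconv : ∀ f : BoundedContinuousFunction (Fin d → ℝ) ℝ,
      Filter.Tendsto (fun n => ∫ x, f x ∂(μ n)) Filter.atTop (nhds (∫ x, f x ∂ν)))
    (Λ : ℕ → Set (Fin d → ℝ)) (A B : ℕ → ℝ) (A₀ B₀ : ℝ)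
    (hRiesz : ∀ n, RieszBounds (μ n) (Λ n) (A n) (B n))
    (hA : Filter.Tendsto A Filter.atTop (nhds A₀)) (hA₀ : 0 < A₀)
    (hB : Filter.Tendsto B Filter.atTop (nhds B₀))
    (hne : (⋂ n, Λ n).Nonempty) :
    RieszBounds ν (⋂ n, Λ n) A₀ B₀ := by
  intro F hF c
  -- the integrand as a bounded continuous function
  have hcont : Continuous fun x : Fin d → ℝ => ‖∑ l ∈ F, c l * expFn l x‖ ^ 2 := by
    apply Continuous.pow
    apply Continuous.norm
    apply continuous_finset_sum
    intro l _
    apply Continuous.mul continuous_const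
    unfold expFn
    exact Complex.continuous_exp.comp (by fun_prop)
  have hnorm1 : ∀ (l x : Fin d → ℝ), ‖expFn l x‖ = 1 := by
    intro l x
    unfold expFn
    rw [show (2 * Real.pi * Complex.I * ((∑ i, l i * x i : ℝ) : ℂ))
        = ((2 * Real.pi * (∑ i, l i * x i) : ℝ) : ℂ) * Complex.I by push_cast; ring]
    exact Complex.norm_exp_ofReal_mul_I _
  have hbd : ∀ x : Fin d → ℝ,
      ‖(‖∑ l ∈ F, c l * expFn l x‖ ^ 2 : ℝ)‖ ≤ (∑ l ∈ F, ‖c l‖) ^ 2 := by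
    intro x
    rw [Real.norm_of_nonneg (by positivity)]
    apply pow_le_pow_left₀ (norm_nonneg _)
    calc ‖∑ l ∈ F, c l * expFn l x‖ ≤ ∑ l ∈ F, ‖c l * expFn l x‖ := norm_sum_le _ _
      _ = ∑ l ∈ F, ‖c l‖ := by
          apply Finset.sum_congr rfl
          intro l _
          rw [norm_mul, hnorm1, mul_one]
  set g : BoundedContinuousFunction (Fin d → ℝ) ℝ :=
    BoundedContinuousFunction.ofNormedAddCommGroup _ hcont _ hbd with hg
  have hgx : ∀ x, g x = ‖∑ l ∈ F, c l * expFn l x‖ ^ 2 := fun x => rfl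
  have htend := hconv g
  simp only [hgx] at htend
  set S := ∑ l ∈ F, ‖c l‖ ^ 2 with hS
  have hSnn : 0 ≤ S := Finset.sum_nonneg fun l _ => by positivity
  have hFn : ∀ n, (↑F : Set (Fin d → ℝ)) ⊆ Λ n := fun n =>
    hF.trans (Set.iInter_subset _ n)
  have hlow : ∀ n, A n ^ 2 * S ≤ ∫ x, ‖∑ l ∈ F, c l * expFn l x‖ ^ 2 ∂(μ n) :=
    fun n => (hRiesz n F (hFn n) c).1
  have hup : ∀ n, ∫ x, ‖∑ l ∈ F, c l * expFn l x‖ ^ 2 ∂(μ n) ≤ B n ^ 2 * S :=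
    fun n => (hRiesz n F (hFn n) c).2
  have hAt : Filter.Tendsto (fun n => A n ^ 2 * S) Filter.atTop (nhds (A₀ ^ 2 * S)) :=
    (hA.pow 2).mul_const S
  have hBt : Filter.Tendsto (fun n => B n ^ 2 * S) Filter.atTop (nhds (B₀ ^ 2 * S)) :=
    (hB.pow 2).mul_const S
  exact ⟨le_of_tendsto_of_tendsto' hAt htend hlow,
    le_of_tendsto_of_tendsto' htend hBt hup⟩
end

section
/- Suppose Borel probability measures μ_n on ℝ^d converge weakly to μ, and for each n the exponentials E(Λ_n) form a Schauder basic sequence in L²(μ_n) with basis constant C_n, with C_n → C < ∞. Then E(∩_n Λ_n) is a Schauder basic sequence in L²(μ) with basis constant at most C. -/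
open MeasureTheory Complex Finset Matrix
open scoped ENNReal NNReal

/-- The exponentials indexed by `lam : Fin K → ℝ^d` (an enumeration of a finite subset of `Λ`)
satisfy the Schauder basis inequality with constant `C` in `L²(μ)`. -/
def SchauderConst {d : ℕ} (μ : Measure (Fin d → ℝ)) (Λ : Set (Fin d → ℝ)) (C : ℝ) : Prop :=
  ∀ (K : ℕ) (lam : Fin K → (Fin d → ℝ)), Function.Injective lam → (∀ j, lam j ∈ Λ) →
    ∀ c : Fin K → ℂ, ∀ k ≤ K,
      Real.sqrt (∫ x, ‖∑ j ∈ Finset.univ.filter (fun j : Fin K => (j : ℕ) < k),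
          c j * expFn (lam j) x‖ ^ 2 ∂μ) ≤
        C * Real.sqrt (∫ x, ‖∑ j, c j * expFn (lam j) x‖ ^ 2 ∂μ)

lemma expFn_norm {d : ℕ} (l x : Fin d → ℝ) : ‖expFn l x‖ = 1 := by
  rw [expFn, Complex.norm_exp]; simp

lemma expFn_cont {d : ℕ} (l : Fin d → ℝ) : Continuous (expFn l) := by
  apply Complex.continuous_exp.comp
  apply Continuous.mul continuous_const
  exact Complex.continuous_ofReal.comp (continuous_finset_sum _ fun i _ =>
    (continuous_const.mul (continuous_apply i)))

lemma tendsto_int {d K : ℕ} (μ : ℕ → Measure (Fin d → ℝ))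
    [∀ n, IsProbabilityMeasure (μ n)]
    (ν : Measure (Fin d → ℝ)) [IsProbabilityMeasure ν]
    (hconv : ∀ f : BoundedContinuousFunction (Fin d → ℝ) ℝ,
      Filter.Tendsto (fun n => ∫ x, f x ∂(μ n)) Filter.atTop (nhds (∫ x, f x ∂ν)))
    (lam : Fin K → (Fin d → ℝ)) (c : Fin K → ℂ) (s : Finset (Fin K)) :
    Filter.Tendsto (fun n => ∫ x, ‖∑ j ∈ s, c j * expFn (lam j) x‖ ^ 2 ∂(μ n))
      Filter.atTop (nhds (∫ x, ‖∑ j ∈ s, c j * expFn (lam j) x‖ ^ 2 ∂ν)) := by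
  have hcont : Continuous (fun x : Fin d → ℝ => ‖∑ j ∈ s, c j * expFn (lam j) x‖ ^ 2) := by
    apply Continuous.pow
    exact (continuous_finset_sum _ fun j _ => continuous_const.mul (expFn_cont (lam j))).norm
  have hbd : ∀ x, ‖‖∑ j ∈ s, c j * expFn (lam j) x‖ ^ 2‖ ≤ (∑ j ∈ s, ‖c j‖) ^ 2 := by
    intro x
    rw [Real.norm_eq_abs, _root_.abs_of_nonneg (by positivity)]
    apply pow_le_pow_left₀ (norm_nonneg _)
    calc ‖∑ j ∈ s, c j * expFn (lam j) x‖ ≤ ∑ j ∈ s, ‖c j * expFn (lam j) x‖ :=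
          norm_sum_le _ _
      _ = ∑ j ∈ s, ‖c j‖ := by
          refine Finset.sum_congr rfl fun j _ => ?_
          rw [norm_mul, expFn_norm, mul_one]
  exact hconv (BoundedContinuousFunction.ofNormedAddCommGroup _ hcont _ hbd)

theorem schauder_limit {d : ℕ} (μ : ℕ → Measure (Fin d → ℝ))
    [∀ n, IsProbabilityMeasure (μ n)]
    (ν : Measure (Fin d → ℝ)) [IsProbabilityMeasure ν]
    (hconv : ∀ f : BoundedContinuousFunction (Fin d → ℝ) ℝ,
      Filter.Tendsto (fun n => ∫ x, f x ∂(μ n)) Filter.atTop (nhds (∫ x, f x ∂ν)))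
    (Λ : ℕ → Set (Fin d → ℝ)) (C : ℕ → ℝ) (C₀ : ℝ)
    (hSch : ∀ n, SchauderConst (μ n) (Λ n) (C n))
    (hC : Filter.Tendsto C Filter.atTop (nhds C₀)) :
    SchauderConst ν (⋂ n, Λ n) C₀ := by
  intro K lam hinj hmem c k hk
  have hmem' : ∀ n j, lam j ∈ Λ n := fun n j => Set.mem_iInter.mp (hmem j) n
  have h1 := (Real.continuous_sqrt.tendsto _).comp
    (tendsto_int μ ν hconv lam c (Finset.univ.filter (fun j : Fin K => (j : ℕ) < k)))
  have h2 := hC.mul ((Real.continuous_sqrt.tendsto _).comp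
    (tendsto_int μ ν hconv lam c Finset.univ))
  exact le_of_tendsto_of_tendsto' h1 h2 fun n => hSch n K lam hinj (hmem' n) c k hk
end
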